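/- Let p ≥ 2 and let y_1, …, y_n be class labels taking values in a set of p classes. Define the ideal kernel matrix Y ∈ ℝ^{n × n} by Y_{ij} = 1 if y_i = y_j and Y_{ij} = −1/(p − 1) otherwise. Then Y is symmetric positive semidefinite. -/

import Mathlib

open scoped Matrix

/-- The ideal kernel matrix `Y_{ij} = 1` if `y_i = y_j` and `Y_{ij} = −1/(p−1)`
otherwise, built from class labels `y : Fin n → Fin p` with `p ≥ 2`, is symmetric
positive semidefinite. -/
theorem stmt17 {n p : ℕ} (hp : 2 ≤ p) (y : Fin n → Fin p) :
    Matrix.PosSemidef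
      (Matrix.of fun i j : Fin n =>
        if y i = y j then (1 : ℝ) else -1 / ((p : ℝ) - 1)) := by
  have hp2 : (2:ℝ) ≤ (p:ℝ) := by exact_mod_cast hp
  have hp1 : (0:ℝ) < (p:ℝ) - 1 := by linarith
  have hp0 : (0:ℝ) < (p:ℝ) := by linarith
  set s : ℝ := Real.sqrt ((p:ℝ)/((p:ℝ)-1)) with hs
  have hs2 : s * s = (p:ℝ)/((p:ℝ)-1) := by
    exact Real.mul_self_sqrt (by positivity)
  set a : ℝ := s*((p:ℝ)-1)/p with ha
  set b : ℝ := -s/p with hb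
  set A : Matrix (Fin n) (Fin p) ℝ := Matrix.of fun i k => if y i = k then a else b with hA
  have key : (Matrix.of fun i j : Fin n =>
        if y i = y j then (1 : ℝ) else -1 / ((p : ℝ) - 1)) = A * Aᴴ := by
    ext i j
    simp only [Matrix.mul_apply, Matrix.conjTranspose_apply, Matrix.of_apply, hA,
      RCLike.star_def, starRingEnd_apply, star_trivial]
    have expand : ∀ k : Fin p, (if y i = k then a else b) * (if y j = k then a else b)
        = b*b + (if y i = k then (a-b)*b else 0) + (if y j = k then b*(a-b) else 0)
          + (if y i = k then (if y j = k then (a-b)*(a-b) else 0) else 0) := by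
      intro k
      by_cases h1 : y i = k <;> by_cases h2 : y j = k <;> simp [h1, h2] <;> ring
    rw [Finset.sum_congr rfl (fun k _ => expand k)]
    rw [Finset.sum_add_distrib, Finset.sum_add_distrib, Finset.sum_add_distrib,
      Finset.sum_const, Finset.sum_ite_eq, Finset.sum_ite_eq, Finset.sum_ite_eq]
    simp only [Finset.mem_univ, if_true, Finset.card_univ, Fintype.card_fin, nsmul_eq_mul]
    have h3 : s*s*((p:ℝ)-1) = (p:ℝ) := by
      rw [hs2]; field_simp
    by_cases h : y i = y j
    · simp only [h, if_true]
      rw [ha, hb]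
      field_simp
      nlinarith [h3, hp1, hp0]
    · simp only [h, if_false]
      have h' : y j ≠ y i := fun e => h e.symm
      simp only [h', if_false, add_zero]
      rw [ha, hb]
      field_simp
      nlinarith [h3, hp1, hp0]
  rw [key]
  exact Matrix.posSemidef_self_mul_conjTranspose A
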